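/- Let α > 0, β > 0 be real numbers. Then the Turán type inequality E_{α,β}(z)·E_{α,β+2}(z) − [E_{α,β+1}(z)]² + (β+1)·E_{α,β+1}(z)·E_{α,β+2}(z) ≥ 0 holds for all z > 0. -/

import Mathlib

open Real Filter

lemma gamma_ratio_big (α C : ℝ) (hα : 0 < α) (hC : 0 < C) :
    ∃ M : ℝ, ∀ x ≥ M, C * Real.Gamma x ≤ Real.Gamma (x + α) := by
  rcases le_or_gt 1 α with h1 | h1
  · refine ⟨max 2 C, fun x hx => ?_⟩
    have hx2 : (2:ℝ) ≤ x := le_trans (le_max_left _ _) hx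
    have hxC : C ≤ x := le_trans (le_max_right _ _) hx
    have hxpos : (0:ℝ) < x := by linarith
    have hg : Real.Gamma (x + 1) ≤ Real.Gamma (x + α) :=
      Real.Gamma_strictMonoOn_Ici.monotoneOn (by simp [Set.mem_Ici]; linarith)
        (by simp [Set.mem_Ici]; linarith) (by linarith)
    rw [Real.Gamma_add_one hxpos.ne'] at hg
    have hgp := Real.Gamma_pos_of_pos hxpos
    nlinarith
  · refine ⟨max 2 ((2*C) ^ (α⁻¹)), fun x hx => ?_⟩
    have hx2 : (2:ℝ) ≤ x := le_trans (le_max_left _ _) hx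
    have hxD : (2*C) ^ (α⁻¹) ≤ x := le_trans (le_max_right _ _) hx
    have hxpos : (0:ℝ) < x := by linarith
    have hxa : (0:ℝ) < x + α := by linarith
    have conv := Real.Gamma_mul_add_mul_le_rpow_Gamma_mul_rpow_Gamma
      (s := x + α) (t := x + 1 + α) (a := α) (b := 1 - α) hxa (by linarith) hα
      (by linarith) (by ring)
    have e1 : α * (x + α) + (1 - α) * (x + 1 + α) = x + 1 := by ring
    rw [e1] at conv
    have e2 : x + 1 + α = (x + α) + 1 := by ring
    rw [e2, Real.Gamma_add_one hxa.ne'] at conv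
    have hgxa := Real.Gamma_pos_of_pos hxa
    have hgx := Real.Gamma_pos_of_pos hxpos
    rw [Real.mul_rpow hxa.le hgxa.le] at conv
    have e3 : Real.Gamma (x+α) ^ α * ((x+α) ^ (1-α) * Real.Gamma (x+α) ^ (1-α))
        = Real.Gamma (x+α) * (x+α) ^ (1-α) := by
      rw [mul_comm ((x+α) ^ (1-α)) _, ← mul_assoc, ← Real.rpow_add hgxa]
      norm_num
    rw [e3, Real.Gamma_add_one hxpos.ne'] at conv
    -- conv : x * Gamma x ≤ Gamma (x+α) * (x+α)^(1-α)
    have hP : (2*C) ≤ (x+α) ^ α := by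
      calc (2*C) = ((2*C) ^ (α⁻¹)) ^ α := by
            rw [Real.rpow_inv_rpow (by positivity) hα.ne']
        _ ≤ (x+α) ^ α := Real.rpow_le_rpow (by positivity) (by linarith) hα.le
    have hPpos : (0:ℝ) < (x+α) ^ α := Real.rpow_pos_of_pos hxa _
    have hCx : C * (x+α) ^ ((1:ℝ)-α) ≤ x := by
      rw [Real.rpow_sub hxa, Real.rpow_one, ← mul_div_assoc, div_le_iff₀ hPpos]
      nlinarith
    have hQpos : (0:ℝ) < (x+α) ^ ((1:ℝ)-α) := Real.rpow_pos_of_pos hxa _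
    have : C * Real.Gamma x * (x+α) ^ ((1:ℝ)-α) ≤ Real.Gamma (x+α) * (x+α) ^ ((1:ℝ)-α) := by
      nlinarith
    exact le_of_mul_le_mul_right this hQpos

lemma summable_ml {α β z : ℝ} (hα : 0 < α) (hβ : 0 < β) (hz : 0 < z) :
    Summable (fun n : ℕ => z ^ n / Real.Gamma (α * n + β)) := by
  obtain ⟨M, hM⟩ := gamma_ratio_big α (2*z) hα (by positivity)
  apply summable_of_ratio_norm_eventually_le (r := 1/2) (by norm_num)
  filter_upwards [eventually_ge_atTop ⌈(M - β)/α⌉₊] with n hn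
  have hx : M ≤ α * n + β := by
    have h1 : (M - β)/α ≤ (⌈(M-β)/α⌉₊ : ℝ) := Nat.le_ceil _
    have h2 : ((⌈(M-β)/α⌉₊:ℕ):ℝ) ≤ (n:ℝ) := Nat.cast_le.mpr hn
    have h3 : (M - β)/α ≤ (n:ℝ) := le_trans h1 h2
    rw [div_le_iff₀ hα] at h3
    linarith [mul_comm (n:ℝ) α]
  have h1 : (0:ℝ) < α * n + β := by positivity
  have hgx : (0:ℝ) < Real.Gamma (α * n + β) := Real.Gamma_pos_of_pos h1
  have hg2 : (0:ℝ) < Real.Gamma (α * n + β + α) := Real.Gamma_pos_of_pos (by positivity)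
  have key : 2*z*Real.Gamma (α * n + β) ≤ Real.Gamma (α * n + β + α) := hM _ hx
  have e : α * ((n:ℕ)+1 : ℕ) + β = α * n + β + α := by push_cast; ring
  rw [e, Real.norm_eq_abs, Real.norm_eq_abs, abs_of_pos (by positivity),
    abs_of_pos (by positivity)]
  have hzn : (0:ℝ) < z ^ n := pow_pos hz n
  rw [show (1:ℝ)/2 * (z ^ n / Real.Gamma (α * n + β))
      = z ^ n / (2 * Real.Gamma (α * n + β)) by ring,
    div_le_div_iff₀ hg2 (by positivity), pow_succ]
  nlinarith [mul_le_mul_of_nonneg_left key hzn.le]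

noncomputable def mittagLeffler (α β z : ℝ) : ℝ :=
  ∑' n : ℕ, z ^ n / Real.Gamma (α * n + β)


/-- Turán type inequality for the Mittag-Leffler function. -/
theorem mittagLeffler_turan (α β : ℝ) (hα : 0 < α) (hβ : 0 < β) :
    ∀ z : ℝ, 0 < z →
      mittagLeffler α β z * mittagLeffler α (β + 2) z -
          (mittagLeffler α (β + 1) z) ^ 2 +
          (β + 1) * mittagLeffler α (β + 1) z * mittagLeffler α (β + 2) z ≥ 0 := by
  intro z hz
  set u : ℕ → ℝ := fun n => α * n + β with hu
  have hupos : ∀ n, 0 < u n := fun n => by positivity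
  set c : ℕ → ℝ := fun n => z ^ n / Real.Gamma (u n + 2) with hc
  have hcpos : ∀ n, 0 < c n := fun n =>
    div_pos (pow_pos hz n) (Real.Gamma_pos_of_pos (by have := hupos n; linarith))
  -- pointwise identities
  have hid1 : ∀ n : ℕ, z ^ n / Real.Gamma (α * n + (β+1)) = (u n + 1) * c n := by
    intro n
    have h1 : (0:ℝ) < u n + 1 := by have := hupos n; linarith
    have e : α * n + (β+1) = u n + 1 := by simp [hu]; ring
    have e2 : u n + 2 = (u n + 1) + 1 := by ring
    rw [e, hc]
    simp only
    rw [e2, Real.Gamma_add_one h1.ne']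
    field_simp
  have hid0 : ∀ n : ℕ, z ^ n / Real.Gamma (α * n + β) = u n * (u n + 1) * c n := by
    intro n
    have h0 := hupos n
    have h1 : (0:ℝ) < u n + 1 := by linarith
    have e : α * n + β = u n := rfl
    have e2 : u n + 2 = (u n + 1) + 1 := by ring
    rw [e, hc]
    simp only
    rw [e2, Real.Gamma_add_one h1.ne', Real.Gamma_add_one h0.ne']
    field_simp
  have hid2 : ∀ n : ℕ, z ^ n / Real.Gamma (α * n + (β+2)) = c n := by
    intro n
    have e : α * n + (β+2) = u n + 2 := by simp [hu]; ring
    rw [e]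
  -- summabilities
  have hsc : Summable c := by
    have := summable_ml (β := β + 2) hα (by linarith) hz
    exact this.congr hid2
  have hsb : Summable (fun n => (u n + 1) * c n) := by
    have := summable_ml (β := β + 1) hα (by linarith) hz
    exact this.congr hid1
  have hsa : Summable (fun n => u n * (u n + 1) * c n) := by
    have := summable_ml (β := β) hα hβ hz
    exact this.congr hid0
  -- rewrite the mittagLeffler values
  have hE2 : mittagLeffler α (β+2) z = ∑' n, c n := tsum_congr hid2
  have hE1 : mittagLeffler α (β+1) z = ∑' n, (u n + 1) * c n := tsum_congr hid1
  have hE0 : mittagLeffler α β z = ∑' n, u n * (u n + 1) * c n := tsum_congr hid0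
  rw [hE0, hE1, hE2]
  set A : ℕ → ℝ := fun n => u n * (u n + 1) * c n with hA
  set B : ℕ → ℝ := fun n => (u n + 1) * c n with hB
  have hAnn : ∀ n, 0 ≤ A n := fun n =>
    mul_nonneg (mul_nonneg (hupos n).le (by have := hupos n; linarith)) (hcpos n).le
  have hBnn : ∀ n, 0 ≤ B n := fun n =>
    mul_nonneg (by have := hupos n; linarith) (hcpos n).le
  have hCnn : ∀ n, 0 ≤ c n := fun n => (hcpos n).le
  have hsAC : Summable (fun p : ℕ × ℕ => A p.1 * c p.2) :=
    hsa.mul_of_nonneg hsc hAnn hCnn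
  have hsBB : Summable (fun p : ℕ × ℕ => B p.1 * B p.2) :=
    hsb.mul_of_nonneg hsb hBnn hBnn
  have hsBC : Summable (fun p : ℕ × ℕ => B p.1 * c p.2) :=
    hsb.mul_of_nonneg hsc hBnn hCnn
  rw [sq, Summable.tsum_mul_tsum hsa hsc hsAC, Summable.tsum_mul_tsum hsb hsb hsBB, mul_assoc,
    Summable.tsum_mul_tsum hsb hsc hsBC]
  -- combine into a single tsum
  set F : ℕ × ℕ → ℝ := fun p => A p.1 * c p.2 - B p.1 * B p.2 + (β+1) * (B p.1 * c p.2)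
    with hF
  have hsF : Summable F := ((hsAC.sub hsBB).add (hsBC.mul_left (β+1)))
  have hmain : (∑' p : ℕ × ℕ, A p.1 * c p.2) - (∑' p : ℕ × ℕ, B p.1 * B p.2)
      + (β+1) * (∑' p : ℕ × ℕ, B p.1 * c p.2) = ∑' p, F p := by
    rw [← tsum_mul_left, ← Summable.tsum_sub hsAC hsBB, ← Summable.tsum_add (hsAC.sub hsBB) (hsBC.mul_left (β+1))]
  rw [hmain]
  -- symmetrization
  have hswap : ∑' p, F p = ∑' p, F (Prod.swap p) :=
    ((Equiv.prodComm ℕ ℕ).tsum_eq F).symm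
  have hsF' : Summable (fun p => F (Prod.swap p)) :=
    (Equiv.prodComm ℕ ℕ).summable_iff.mpr hsF
  have h2 : 2 * ∑' p, F p = ∑' p, (F p + F (Prod.swap p)) := by
    rw [Summable.tsum_add hsF hsF', ← hswap]; ring
  have hterm : ∀ p : ℕ × ℕ, 0 ≤ F p + F (Prod.swap p) := by
    rintro ⟨m, n⟩
    have hp := hupos m
    have hq := hupos n
    have hcm := hcpos m
    have hcn := hcpos n
    have key : F (m, n) + F (Prod.swap (m, n))
        = c m * c n * ((u m - u n)^2 + β * (u m + u n + 2)) := by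
      simp only [hF, hA, hB, Prod.swap]
      ring
    rw [key]
    have : 0 ≤ (u m - u n)^2 + β * (u m + u n + 2) := by positivity
    positivity
  have : 0 ≤ 2 * ∑' p, F p := by
    rw [h2]; exact tsum_nonneg hterm
  linarith
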